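/- Let f : X × Y → ℝ be continuous on X × Y where X ⊆ ℝ^p and Y ⊆ ℝ^q are compact, and suppose f is bounded below. Let (x_t, y_t) be generated by alternate minimization: x_{t+1} ∈ argmin_{x∈X} f(x, y_t), y_{t+1} ∈ argmin_{y∈Y} f(x_{t+1}, y). Then every accumulation point (x*, y*) of the sequence (x_t, y_t) is a partial optimum: f(x*, y*) ≤ f(x, y*) for all x ∈ X and f(x*, y*) ≤ f(x*, y) for all y ∈ Y. -/
import Mathlib

open Filter Topology

/-- For alternate minimization of a continuous function `f` on a product of
compact sets, bounded below, every accumulation point of the iterate sequence is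
a partial optimum. -/
theorem stmt_13 {p q : ℕ}
    (X : Set (Fin p → ℝ)) (Y : Set (Fin q → ℝ))
    (hXc : IsCompact X) (hYc : IsCompact Y)
    (hXne : X.Nonempty) (hYne : Y.Nonempty)
    (f : (Fin p → ℝ) × (Fin q → ℝ) → ℝ)
    (hf : ContinuousOn f (X ×ˢ Y))
    (hbdd : ∃ C : ℝ, ∀ z ∈ X ×ˢ Y, C ≤ f z)
    (x : ℕ → Fin p → ℝ) (y : ℕ → Fin q → ℝ)
    (hxmem : ∀ t, x t ∈ X) (hymem : ∀ t, y t ∈ Y)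
    (hx : ∀ t, ∀ a ∈ X, f (x (t + 1), y t) ≤ f (a, y t))
    (hy : ∀ t, ∀ b ∈ Y, f (x (t + 1), y (t + 1)) ≤ f (x (t + 1), b))
    (xs : Fin p → ℝ) (ys : Fin q → ℝ)
    (hacc : MapClusterPt (xs, ys) atTop (fun t => (x t, y t))) :
    (∀ a ∈ X, f (xs, ys) ≤ f (a, ys)) ∧ (∀ b ∈ Y, f (xs, ys) ≤ f (xs, b)) := by
  obtain ⟨φ, hφ, hφt⟩ := TopologicalSpace.FirstCountableTopology.tendsto_subseq hacc
  have hxt : Tendsto (fun k => x (φ k)) atTop (𝓝 xs) :=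
    (continuous_fst.tendsto _).comp hφt
  have hyt : Tendsto (fun k => y (φ k)) atTop (𝓝 ys) :=
    (continuous_snd.tendsto _).comp hφt
  have hxs : xs ∈ X := hXc.isClosed.mem_of_tendsto hxt (Eventually.of_forall fun k => hxmem _)
  have hys : ys ∈ Y := hYc.isClosed.mem_of_tendsto hyt (Eventually.of_forall fun k => hymem _)
  obtain ⟨C, hC⟩ := hbdd
  set c : ℕ → ℝ := fun t => f (x t, y t) with hc
  -- c is antitone
  have hmono : Antitone c := by
    apply antitone_nat_of_succ_le
    intro t
    calc c (t + 1) = f (x (t + 1), y (t + 1)) := rfl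
      _ ≤ f (x (t + 1), y t) := hy t (y t) (hymem t)
      _ ≤ f (x t, y t) := hx t (x t) (hxmem t)
  have hbelow : ∀ t, C ≤ c t := fun t => hC _ ⟨hxmem t, hymem t⟩
  -- f is continuous at every point of X ×ˢ Y along sequences in X ×ˢ Y
  have hcont : ∀ (a : Fin p → ℝ) (b : Fin q → ℝ), a ∈ X → b ∈ Y →
      ∀ (u : ℕ → (Fin p → ℝ) × (Fin q → ℝ)), (∀ k, u k ∈ X ×ˢ Y) →
      Tendsto u atTop (𝓝 (a, b)) → Tendsto (fun k => f (u k)) atTop (𝓝 (f (a, b))) := by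
    intro a b ha hb u hu hut
    exact (hf (a, b) ⟨ha, hb⟩).tendsto.comp
      (tendsto_nhdsWithin_iff.2 ⟨hut, Eventually.of_forall hu⟩)
  -- c ∘ φ tends to f (xs, ys)
  have hcφ : Tendsto (fun k => c (φ k)) atTop (𝓝 (f (xs, ys))) :=
    hcont xs ys hxs hys (fun k => (x (φ k), y (φ k)))
      (fun k => ⟨hxmem _, hymem _⟩) (hxt.prodMk_nhds hyt)
  -- c converges (antitone bounded below), limit equals f (xs, ys)
  have hbdd' : BddBelow (Set.range c) := ⟨C, by rintro _ ⟨t, rfl⟩; exact hbelow t⟩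
  have hcL : Tendsto c atTop (𝓝 (⨅ t, c t)) := tendsto_atTop_ciInf hmono hbdd'
  have hL : f (xs, ys) = ⨅ t, c t :=
    tendsto_nhds_unique hcφ (hcL.comp hφ.tendsto_atTop)
  constructor
  · intro a ha
    have h1 : Tendsto (fun k => c (φ k + 1)) atTop (𝓝 (f (xs, ys))) := by
      rw [hL]
      exact hcL.comp ((tendsto_add_atTop_nat 1).comp hφ.tendsto_atTop)
    have h2 : Tendsto (fun k => f (a, y (φ k))) atTop (𝓝 (f (a, ys))) :=
      hcont a ys ha hys _ (fun k => ⟨ha, hymem _⟩)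
        ((tendsto_const_nhds).prodMk_nhds hyt)
    refine le_of_tendsto_of_tendsto' h1 h2 fun k => ?_
    calc c (φ k + 1) = f (x (φ k + 1), y (φ k + 1)) := rfl
      _ ≤ f (x (φ k + 1), y (φ k)) := hy _ _ (hymem _)
      _ ≤ f (a, y (φ k)) := hx _ a ha
  · intro b hb
    have h2 : Tendsto (fun k => f (x (φ k), b)) atTop (𝓝 (f (xs, b))) :=
      hcont xs b hxs hb _ (fun k => ⟨hxmem _, hb⟩)
        (hxt.prodMk_nhds tendsto_const_nhds)
    refine le_of_tendsto_of_tendsto hcφ h2 ?_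
    filter_upwards [eventually_ge_atTop 1] with k hk
    have hφk : 1 ≤ φ k := le_trans hk (hφ.le_apply)
    obtain ⟨m, hm⟩ : ∃ m, φ k = m + 1 := ⟨φ k - 1, (Nat.succ_pred_eq_of_pos hφk).symm⟩
    show c (φ k) ≤ f (x (φ k), b)
    rw [hm]
    exact hy m b hb
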